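/- (Accumulation points of alternating minimization are blockwise optimal.) Let K ⊆ ℝ^p and L ⊆ ℝ^q be nonempty compact sets and let f : ℝ^p × ℝ^q → ℝ be continuous. Suppose sequences (x^ℓ)_{ℓ≥1} ⊆ K and (y^ℓ)_{ℓ≥1} ⊆ L satisfy, for every ℓ ≥ 1: y^ℓ minimizes f(x^ℓ, ·) over L and x^{ℓ+1} minimizes f(·, y^ℓ) over K. Then every accumulation point (x̂, ŷ) ∈ K × L of the sequence ((x^ℓ, y^ℓ))_{ℓ≥1} is blockwise optimal: x̂ minimizes f(·, ŷ) over K and ŷ minimizes f(x̂, ·) over L, and f(x̂, ŷ) = inf_{ℓ ≥ 1} f(x^ℓ, y^ℓ). -/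

import Mathlib

/-- Accumulation points of alternating minimization are blockwise optimal: for a
continuous `f : ℝ^p × ℝ^q → ℝ` and nonempty compact `K ⊆ ℝ^p`, `L ⊆ ℝ^q`, if
`y^ℓ` minimizes `f(x^ℓ, ·)` over `L` and `x^{ℓ+1}` minimizes `f(·, y^ℓ)` over `K`
for all `ℓ ≥ 1`, then every accumulation point `(x̂, ŷ) ∈ K × L` of the sequence
`((x^ℓ, y^ℓ))_{ℓ ≥ 1}` is blockwise optimal and satisfies
`f(x̂, ŷ) = inf_{ℓ ≥ 1} f(x^ℓ, y^ℓ)`. -/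
theorem alternating_minimization_accumulation_point_blockwise_optimal
    {p q : ℕ}
    (K : Set (EuclideanSpace ℝ (Fin p))) (L : Set (EuclideanSpace ℝ (Fin q)))
    (hKne : K.Nonempty) (hKcpt : IsCompact K)
    (hLne : L.Nonempty) (hLcpt : IsCompact L)
    (f : EuclideanSpace ℝ (Fin p) → EuclideanSpace ℝ (Fin q) → ℝ)
    (hfCont : Continuous (Function.uncurry f))
    (x : ℕ → EuclideanSpace ℝ (Fin p)) (y : ℕ → EuclideanSpace ℝ (Fin q))
    (hxK : ∀ ℓ, 1 ≤ ℓ → x ℓ ∈ K) (hyL : ∀ ℓ, 1 ≤ ℓ → y ℓ ∈ L)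
    -- `y^ℓ` minimizes `f(x^ℓ, ·)` over `L`
    (hymin : ∀ ℓ, 1 ≤ ℓ → ∀ y' ∈ L, f (x ℓ) (y ℓ) ≤ f (x ℓ) y')
    -- `x^{ℓ+1}` minimizes `f(·, y^ℓ)` over `K`
    (hxmin : ∀ ℓ, 1 ≤ ℓ → ∀ x' ∈ K, f (x (ℓ + 1)) (y ℓ) ≤ f x' (y ℓ))
    (xhat : EuclideanSpace ℝ (Fin p)) (yhat : EuclideanSpace ℝ (Fin q))
    (hxhat : xhat ∈ K) (hyhat : yhat ∈ L)
    -- `(x̂, ŷ)` is an accumulation point of the sequence `((x^ℓ, y^ℓ))_{ℓ ≥ 1}`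
    (φ : ℕ → ℕ) (hφmono : StrictMono φ) (hφone : ∀ j, 1 ≤ φ j)
    (hacc : Filter.Tendsto (fun j => (x (φ j), y (φ j))) Filter.atTop
      (nhds (xhat, yhat))) :
    (∀ x' ∈ K, f xhat yhat ≤ f x' yhat) ∧
    (∀ y' ∈ L, f xhat yhat ≤ f xhat y') ∧
    IsGLB {c : ℝ | ∃ ℓ, 1 ≤ ℓ ∧ c = f (x ℓ) (y ℓ)} (f xhat yhat) := by

  set g : ℕ → ℝ := fun ℓ => f (x ℓ) (y ℓ) with hg
  -- one-step decrease
  have hstep : ∀ ℓ, 1 ≤ ℓ → g (ℓ + 1) ≤ g ℓ := by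
    intro ℓ hℓ
    have h1 : f (x (ℓ + 1)) (y (ℓ + 1)) ≤ f (x (ℓ + 1)) (y ℓ) :=
      hymin (ℓ + 1) (le_trans hℓ (Nat.le_succ ℓ)) (y ℓ) (hyL ℓ hℓ)
    have h2 : f (x (ℓ + 1)) (y ℓ) ≤ f (x ℓ) (y ℓ) :=
      hxmin ℓ hℓ (x ℓ) (hxK ℓ hℓ)
    exact le_trans h1 h2
  -- monotone decrease
  have hmono : ∀ a b, 1 ≤ a → a ≤ b → g b ≤ g a := by
    intro a b ha hab
    induction b with
    | zero => omega
    | succ n ih =>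
      rcases Nat.lt_or_ge a (n + 1) with h | h
      · have hn : a ≤ n := Nat.lt_succ_iff.mp h
        exact le_trans (hstep n (le_trans ha hn)) (ih hn)
      · have : a = n + 1 := le_antisymm hab h
        simp [this]
  -- convergence of g ∘ φ to f xhat yhat
  have hconv : Filter.Tendsto (fun j => g (φ j)) Filter.atTop
      (nhds (f xhat yhat)) := by
    have := (hfCont.tendsto (xhat, yhat)).comp hacc
    simpa [Function.uncurry, Function.comp_def, hg] using this
  -- lower bound
  have hlb : ∀ ℓ, 1 ≤ ℓ → f xhat yhat ≤ g ℓ := by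
    intro ℓ hℓ
    refine le_of_tendsto hconv ?_
    filter_upwards [Filter.eventually_ge_atTop ℓ] with j hj
    exact hmono ℓ (φ j) hℓ (le_trans hj (hφmono.le_apply))
  have hyφ : Filter.Tendsto (fun j => y (φ j)) Filter.atTop (nhds yhat) :=
    (continuous_snd.tendsto _).comp hacc
  have hxφ : Filter.Tendsto (fun j => x (φ j)) Filter.atTop (nhds xhat) :=
    (continuous_fst.tendsto _).comp hacc
  refine ⟨?_, ?_, ?_, ?_⟩
  · -- x̂ minimizes f(·, ŷ)
    intro x' hx'
    have hj : ∀ j : ℕ, f xhat yhat ≤ f x' (y (φ j)) := by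
      intro j
      have h1 : f xhat yhat ≤ g (φ j + 1) :=
        hlb (φ j + 1) (le_trans (hφone j) (Nat.le_succ _))
      have h2 : g (φ j + 1) ≤ f (x (φ j + 1)) (y (φ j)) :=
        hymin (φ j + 1) (le_trans (hφone j) (Nat.le_succ _)) (y (φ j))
          (hyL (φ j) (hφone j))
      have h3 : f (x (φ j + 1)) (y (φ j)) ≤ f x' (y (φ j)) :=
        hxmin (φ j) (hφone j) x' hx'
      exact le_trans h1 (le_trans h2 h3)
    have htend : Filter.Tendsto (fun j => f x' (y (φ j))) Filter.atTop
        (nhds (f x' yhat)) := by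
      have := (hfCont.tendsto (x', yhat)).comp
        (Filter.Tendsto.prodMk_nhds tendsto_const_nhds hyφ)
      simpa [Function.uncurry, Function.comp_def] using this
    exact ge_of_tendsto' htend hj
  · -- ŷ minimizes f(x̂, ·)
    intro y' hy'
    have hj : ∀ j : ℕ, g (φ j) ≤ f (x (φ j)) y' := fun j =>
      hymin (φ j) (hφone j) y' hy'
    have htend : Filter.Tendsto (fun j => f (x (φ j)) y') Filter.atTop
        (nhds (f xhat y')) := by
      have := (hfCont.tendsto (xhat, y')).comp
        (Filter.Tendsto.prodMk_nhds hxφ tendsto_const_nhds)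
      simpa [Function.uncurry, Function.comp_def] using this
    exact le_of_tendsto_of_tendsto' hconv htend hj
  · -- lower bound of the set
    rintro c ⟨ℓ, hℓ, rfl⟩
    exact hlb ℓ hℓ
  · -- greatest lower bound
    intro b hb
    refine ge_of_tendsto hconv ?_
    filter_upwards with j
    exact hb ⟨φ j, hφone j, rfl⟩
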